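/- Let k be even, v ∈ ℝ^k have exactly k/2 entries equal to 1/√k and k/2 entries equal to −1/√k, let t be a nonnegative integer, η > 0, and 0 < γ ≤ η/(8√k). Let x ∈ ℝ^d and y ∈ {−1,1}, and suppose the hidden weight columns w_1, …, w_k ∈ ℝ^d satisfy |w_i · x − t η v_i y / 2| ≤ γ for every i ∈ [k]. Then the network output f(x) = Σ_{i=1}^k v_i ReLU(w_i · x) satisfies |y f(x) − t η/4| ≤ γ √k. Moreover, if t ≥ 1 then every hidden unit i with y v_i < 0 is inactive (w_i · x < 0). -/

import Mathlib

noncomputable section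

def relu (z : ℝ) : ℝ := max z 0

/-- Output weights: exactly `k/2` entries equal to `1/√k` and `k/2` entries `-1/√k`. -/
def balancedSigns (k : ℕ) (v : Fin k → ℝ) : Prop :=
  (Finset.univ.filter fun i => v i = 1 / Real.sqrt k).card = k / 2 ∧
  (Finset.univ.filter fun i => v i = -(1 / Real.sqrt k)).card = k / 2 ∧
  ∀ i, v i = 1 / Real.sqrt k ∨ v i = -(1 / Real.sqrt k)

/-- if every hidden unit's preactivation satisfies
`|wᵢ·x − tηvᵢy/2| ≤ γ` with `γ ≤ η/(8√k)`, then `|y f(x) − tη/4| ≤ γ√k`, and for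
`t ≥ 1` every unit with `y vᵢ < 0` is inactive. -/
theorem network_output_from_preactivations (k d : ℕ) (hk : Even k)
    (v : Fin k → ℝ) (hv : balancedSigns k v)
    (t : ℕ) (η γ : ℝ) (hη : 0 < η) (hγ0 : 0 < γ)
    (hγ : γ ≤ η / (8 * Real.sqrt k))
    (x : Fin d → ℝ) (y : ℝ) (hy : y = 1 ∨ y = -1)
    (w : Fin k → Fin d → ℝ)
    (hw : ∀ i, |(∑ l, w i l * x l) - (t : ℝ) * η * v i * y / 2| ≤ γ) :
    |y * (∑ i, v i * relu (∑ l, w i l * x l)) - (t : ℝ) * η / 4| ≤ γ * Real.sqrt k ∧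
    (1 ≤ t → ∀ i, y * v i < 0 → (∑ l, w i l * x l) < 0) := by
  obtain ⟨hv1, hv2, hv3⟩ := hv
  have hk0 : k ≠ 0 := by
    rintro rfl
    simp [Real.sqrt_zero] at hγ
    linarith
  have hkpos : (0:ℝ) < k := by exact_mod_cast Nat.pos_of_ne_zero hk0
  set S := Real.sqrt (k:ℝ) with hSdef
  have hS : 0 < S := Real.sqrt_pos.mpr hkpos
  have hS2 : S * S = k := Real.mul_self_sqrt hkpos.le
  -- sign of y * v i
  have hu : ∀ i, y * v i = 1/S ∨ y * v i = -(1/S) := by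
    intro i
    rcases hy with rfl | rfl <;> rcases hv3 i with h | h <;> rw [h] <;>
      [left; right; right; left] <;> ring
  -- part 2
  have part2 : 1 ≤ t → ∀ i, y * v i < 0 → (∑ l, w i l * x l) < 0 := by
    intro ht i hneg
    have huneg : y * v i = -(1/S) := by
      rcases hu i with h | h
      · exfalso; rw [h] at hneg; have := one_div_pos.mpr hS; linarith
      · exact h
    have ha : (t : ℝ) * η * v i * y / 2 = -((t:ℝ) * η / (2*S)) := by
      have : (t : ℝ) * η * v i * y / 2 = (t:ℝ) * η * (y * v i) / 2 := by ring
      rw [this, huneg]; field_simp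
    have hb := (abs_le.mp (hw i)).2
    rw [ha] at hb
    have ht1 : (1:ℝ) ≤ (t:ℝ) := by exact_mod_cast ht
    have h1 : η / (8*S) < η / (2*S) := by
      apply div_lt_div_of_pos_left hη (by positivity); nlinarith
    have h2 : η / (2*S) ≤ (t:ℝ) * η / (2*S) := by
      gcongr; nlinarith
    linarith
  refine ⟨?_, part2⟩
  -- per-unit bound
  have habs : ∀ i, |y * v i| = 1/S := by
    intro i
    rcases hu i with h | h <;> rw [h]
    · exact abs_of_pos (one_div_pos.mpr hS)
    · rw [abs_neg]; exact abs_of_pos (one_div_pos.mpr hS)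
  have hper : ∀ i, |y * v i * relu (∑ l, w i l * x l)
      - y * v i * relu ((t : ℝ) * η * v i * y / 2)| ≤ γ / S := by
    intro i
    rw [← mul_sub, abs_mul, habs i]
    have h1 : |relu (∑ l, w i l * x l) - relu ((t : ℝ) * η * v i * y / 2)|
        ≤ |(∑ l, w i l * x l) - (t : ℝ) * η * v i * y / 2| := by
      simpa [relu] using abs_max_sub_max_le_abs (∑ l, w i l * x l)
        ((t : ℝ) * η * v i * y / 2) 0
    have h2 := le_trans h1 (hw i)
    calc (1/S) * |relu (∑ l, w i l * x l) - relu ((t : ℝ) * η * v i * y / 2)|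
        ≤ (1/S) * γ := by
          exact mul_le_mul_of_nonneg_left h2 (by positivity)
      _ = γ / S := by ring
  -- value of the centred sum
  have hc : ∀ i, y * v i * relu ((t : ℝ) * η * v i * y / 2)
      = if y * v i = 1/S then (t:ℝ) * η / (2*(k:ℝ)) else 0 := by
    intro i
    have ha : (t : ℝ) * η * v i * y / 2 = (t:ℝ) * η * (y * v i) / 2 := by ring
    rcases hu i with h | h
    · rw [if_pos h, ha, h]
      have hnn : (0:ℝ) ≤ (t:ℝ) * η * (1/S) / 2 := by positivity
      rw [show relu ((t:ℝ) * η * (1/S) / 2) = (t:ℝ) * η * (1/S) / 2 from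
        max_eq_left hnn]
      rw [← hS2]; field_simp
    · rw [if_neg (by rw [h]; intro heq; have := one_div_pos.mpr hS; linarith), ha, h]
      have hnp : (t:ℝ) * η * (-(1/S)) / 2 ≤ 0 := by
        have : (0:ℝ) ≤ (t:ℝ) * η * (1/S) / 2 := by positivity
        linarith
      rw [show relu ((t:ℝ) * η * (-(1/S)) / 2) = 0 from max_eq_right hnp]
      ring
  have hcard : (Finset.univ.filter fun i => y * v i = 1/S).card = k / 2 := by
    rcases hy with rfl | rfl
    · rw [← hv1]; congr 1; apply Finset.filter_congr; intro i _; simp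
    · rw [← hv2]; congr 1; apply Finset.filter_congr; intro i _
      constructor <;> intro h <;> push_cast at h ⊢ <;> linarith
  have hsum : ∑ i, y * v i * relu ((t : ℝ) * η * v i * y / 2) = (t:ℝ) * η / 4 := by
    rw [Finset.sum_congr rfl (fun i _ => hc i), Finset.sum_ite, Finset.sum_const,
      Finset.sum_const_zero, add_zero, hcard]
    obtain ⟨m, hm⟩ := hk
    have hm2 : k / 2 = m := by omega
    have hmne : (m:ℝ) ≠ 0 := by
      have : m ≠ 0 := by omega
      exact_mod_cast this
    rw [hm2, hm]
    push_cast
    field_simp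
    ring
    rw [mul_assoc, mul_inv_cancel₀ hmne, mul_one]
  -- assemble
  have hrw : y * (∑ i, v i * relu (∑ l, w i l * x l))
      = ∑ i, y * v i * relu (∑ l, w i l * x l) := by
    rw [Finset.mul_sum]; exact Finset.sum_congr rfl fun i _ => by ring
  rw [hrw, ← hsum, ← Finset.sum_sub_distrib]
  calc |∑ i, (y * v i * relu (∑ l, w i l * x l)
        - y * v i * relu ((t : ℝ) * η * v i * y / 2))|
      ≤ ∑ i, |y * v i * relu (∑ l, w i l * x l)
        - y * v i * relu ((t : ℝ) * η * v i * y / 2)| := Finset.abs_sum_le_sum_abs _ _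
    _ ≤ ∑ _i : Fin k, γ / S := Finset.sum_le_sum fun i _ => hper i
    _ = (k:ℝ) * (γ / S) := by rw [Finset.sum_const, Finset.card_univ, Fintype.card_fin]; ring
    _ = γ * S := by rw [← hS2]; field_simp


end
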